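/- If p : ℕ → (0,∞) is a gauge with constant c_p (so p(n+1)/p(n) strongly almost converges to c_p), then the sequence p(m+n)/p(m) strongly almost converges to c_p^n as m → ∞, for every fixed n ∈ ℕ. -/

import Mathlib

noncomputable section

/-- A complex sequence is bounded. -/
def IsBoundedSeq (u : ℕ → ℂ) : Prop := ∃ C : ℝ, ∀ n, ‖u n‖ ≤ C

/-- Almost convergence (Lorentz) of a complex sequence: the Cesàro averages
`(1/(n+1)) ∑_{i=k}^{k+n} u i` converge to `c` uniformly in `k`. -/
def AlmostConvergentC (u : ℕ → ℂ) (c : ℂ) : Prop :=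
  ∀ ε : ℝ, 0 < ε → ∃ N : ℕ, ∀ n ≥ N, ∀ k : ℕ,
    ‖(∑ i ∈ Finset.range (n + 1), u (k + i)) / ((n : ℂ) + 1) - c‖ < ε

/-- Almost convergence (Lorentz) of a real sequence. -/
def AlmostConvergentR (u : ℕ → ℝ) (c : ℝ) : Prop :=
  ∀ ε : ℝ, 0 < ε → ∃ N : ℕ, ∀ n ≥ N, ∀ k : ℕ,
    |(∑ i ∈ Finset.range (n + 1), u (k + i)) / ((n : ℝ) + 1) - c| < ε

/-- A Banach limit: a shift-invariant positive linear functional on `ℓ^∞(ℕ, ℂ)`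
with `L(1) = 1 = ‖L‖`. -/
structure BanachLimit where
  toFun : (ℕ → ℂ) → ℂ
  map_add' : ∀ u v : ℕ → ℂ, IsBoundedSeq u → IsBoundedSeq v →
    toFun (u + v) = toFun u + toFun v
  map_smul' : ∀ (a : ℂ) (u : ℕ → ℂ), IsBoundedSeq u → toFun (a • u) = a * toFun u
  norm_le' : ∀ (u : ℕ → ℂ) (C : ℝ), (∀ n, ‖u n‖ ≤ C) → ‖toFun u‖ ≤ C
  map_one' : toFun (fun _ => 1) = 1
  shift' : ∀ u : ℕ → ℂ, IsBoundedSeq u → toFun (fun n => u (n + 1)) = toFun u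
  pos' : ∀ u : ℕ → ℂ, (∀ n, ∃ r : ℝ, 0 ≤ r ∧ u n = (r : ℂ)) →
    ∃ r : ℝ, 0 ≤ r ∧ toFun u = (r : ℂ)

/-- A gauge with constant `c`: `p : ℕ → (0,∞)` with `p(n+1)/p(n)` strongly almost
convergent to `c > 0`. -/
def IsGauge (p : ℕ → ℝ) (c : ℝ) : Prop :=
  (∀ n, 0 < p n) ∧ 0 < c ∧ AlmostConvergentR (fun n => |p (n + 1) / p n - c|) 0

/-- For a gauge `p` with constant `c`, the sequence `m ↦ p(m+n)/p(m)` strongly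
almost converges to `c ^ n`, for every fixed `n`. -/
lemma ac_bound (u : ℕ → ℝ) (hu : ∀ m, 0 ≤ u m) (h : AlmostConvergentR u 0) :
    ∃ C : ℝ, ∀ m, u m ≤ C := by
  obtain ⟨N, hN⟩ := h 1 one_pos
  refine ⟨(N : ℝ) + 1, fun m => ?_⟩
  have h1 := hN N le_rfl m
  rw [sub_zero] at h1
  have hpos : (0:ℝ) < (N:ℝ) + 1 := by positivity
  have hnn : 0 ≤ ∑ i ∈ Finset.range (N+1), u (m+i) :=
    Finset.sum_nonneg fun i _ => hu _
  rw [abs_of_nonneg (div_nonneg hnn hpos.le), div_lt_one hpos] at h1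
  calc u m = u (m + 0) := by ring_nf
    _ ≤ ∑ i ∈ Finset.range (N+1), u (m+i) :=
        Finset.single_le_sum (f := fun i => u (m+i)) (fun i _ => hu _)
          (Finset.mem_range.2 (Nat.succ_pos N))
    _ ≤ (N:ℝ) + 1 := h1.le

lemma ac_mono (u s : ℕ → ℝ) (hu : ∀ m, 0 ≤ u m) (hle : ∀ m, u m ≤ s m)
    (hs : AlmostConvergentR s 0) : AlmostConvergentR u 0 := by
  intro ε hε
  obtain ⟨N, hN⟩ := hs ε hε
  refine ⟨N, fun n hn k => ?_⟩
  have h1 := hN n hn k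
  rw [sub_zero] at h1 ⊢
  have hpos : (0:ℝ) < (n:ℝ) + 1 := by positivity
  have hnn : 0 ≤ (∑ i ∈ Finset.range (n+1), u (k+i)) / ((n:ℝ)+1) :=
    div_nonneg (Finset.sum_nonneg fun i _ => hu _) hpos.le
  rw [abs_of_nonneg hnn]
  calc (∑ i ∈ Finset.range (n+1), u (k+i)) / ((n:ℝ)+1)
      ≤ (∑ i ∈ Finset.range (n+1), s (k+i)) / ((n:ℝ)+1) := by
        gcongr with i hi
        exact hle _
    _ ≤ |(∑ i ∈ Finset.range (n+1), s (k+i)) / ((n:ℝ)+1)| := le_abs_self _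
    _ < ε := h1

lemma ac_shift (u : ℕ → ℝ) (d : ℕ) (h : AlmostConvergentR u 0) :
    AlmostConvergentR (fun m => u (m + d)) 0 := by
  intro ε hε
  obtain ⟨N, hN⟩ := h ε hε
  refine ⟨N, fun n hn k => ?_⟩
  have h1 := hN n hn (k + d)
  have : ∀ i, u (k + i + d) = u (k + d + i) := fun i => by ring_nf
  simpa [this] using h1

lemma ac_comb (v w : ℕ → ℝ) (A B : ℝ) (hA : 0 ≤ A) (hB : 0 ≤ B)
    (hv : AlmostConvergentR v 0) (hw : AlmostConvergentR w 0) :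
    AlmostConvergentR (fun m => A * v m + B * w m) 0 := by
  intro ε hε
  obtain ⟨N1, h1⟩ := hv (ε / (2 * (A + 1))) (by positivity)
  obtain ⟨N2, h2⟩ := hw (ε / (2 * (B + 1))) (by positivity)
  refine ⟨max N1 N2, fun n hn k => ?_⟩
  have e1 := h1 n (le_trans (le_max_left _ _) hn) k
  have e2 := h2 n (le_trans (le_max_right _ _) hn) k
  rw [sub_zero] at e1 e2 ⊢
  have hpos : (0:ℝ) < (n:ℝ) + 1 := by positivity
  have key : (∑ i ∈ Finset.range (n+1), (A * v (k+i) + B * w (k+i))) / ((n:ℝ)+1)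
      = A * ((∑ i ∈ Finset.range (n+1), v (k+i)) / ((n:ℝ)+1))
        + B * ((∑ i ∈ Finset.range (n+1), w (k+i)) / ((n:ℝ)+1)) := by
    rw [Finset.sum_add_distrib, ← Finset.mul_sum, ← Finset.mul_sum]
    ring
  rw [key]
  calc |A * ((∑ i ∈ Finset.range (n+1), v (k+i)) / ((n:ℝ)+1))
        + B * ((∑ i ∈ Finset.range (n+1), w (k+i)) / ((n:ℝ)+1))|
      ≤ A * |(∑ i ∈ Finset.range (n+1), v (k+i)) / ((n:ℝ)+1)|
        + B * |(∑ i ∈ Finset.range (n+1), w (k+i)) / ((n:ℝ)+1)| := by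
        refine (abs_add_le _ _).trans ?_
        rw [abs_mul, abs_mul, abs_of_nonneg hA, abs_of_nonneg hB]
    _ ≤ (A + 1) * |(∑ i ∈ Finset.range (n+1), v (k+i)) / ((n:ℝ)+1)|
        + (B + 1) * |(∑ i ∈ Finset.range (n+1), w (k+i)) / ((n:ℝ)+1)| := by
        gcongr <;> simp [abs_nonneg]
    _ < (A + 1) * (ε / (2 * (A + 1))) + (B + 1) * (ε / (2 * (B + 1))) := by
        gcongr <;> linarith
    _ = ε := by field_simp; ring

theorem gauge_ratio_pow (p : ℕ → ℝ) (c : ℝ) (hp : IsGauge p c) (n : ℕ) :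
    AlmostConvergentR (fun m => |p (m + n) / p m - c ^ n|) 0 := by
  obtain ⟨hpos, hc, hac⟩ := hp
  induction n with
  | zero =>
    intro ε hε
    refine ⟨0, fun n _ k => ?_⟩
    have hz : ∀ m : ℕ, |p (m + 0) / p m - c ^ 0| = 0 := fun m => by
      simp [div_self (hpos m).ne']
    simp only [hz]
    simpa using hε
  | succ n ih =>
    obtain ⟨C, hC⟩ := ac_bound _ (fun m => abs_nonneg _) hac
    have hC0 : 0 ≤ C := le_trans (abs_nonneg _) (hC 0)
    have hq : ∀ m, |p (m + 1) / p m| ≤ c + C := by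
      intro m
      calc |p (m + 1) / p m| = |(p (m + 1) / p m - c) + c| := by ring_nf
        _ ≤ |p (m + 1) / p m - c| + |c| := abs_add_le _ _
        _ ≤ C + c := by rw [abs_of_pos hc]; exact add_le_add_left (hC m) c
        _ = c + C := by ring
    have hw : AlmostConvergentR (fun m => |p (m + n + 1) / p (m + n) - c|) 0 := by
      have := ac_shift (fun j => |p (j + 1) / p j - c|) n hac
      convert this using 2 with m
    refine ac_mono _ (fun m => (c + C) * |p (m + n) / p m - c ^ n|
        + c ^ n * |p (m + n + 1) / p (m + n) - c|)
      (fun m => abs_nonneg _) ?_ ?_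
    · intro m
      have h0 : p (m + n) ≠ 0 := (hpos _).ne'
      set q := p (m + n + 1) / p (m + n) with hqdef
      set r := p (m + n) / p m with hrdef
      have hqr : p (m + (n + 1)) / p m = q * r := by
        rw [hqdef, hrdef, div_mul_div_comm]
        rw [show m + (n + 1) = m + n + 1 by ring]
        rw [mul_comm (p (m + n)) (p m), mul_div_mul_right _ _ h0]
      show |p (m + (n + 1)) / p m - c ^ (n + 1)| ≤ _
      rw [hqr]
      calc |q * r - c ^ (n + 1)| = |q * (r - c ^ n) + c ^ n * (q - c)| := by
            congr 1; ring
        _ ≤ |q| * |r - c ^ n| + |c ^ n| * |q - c| := by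
            refine (abs_add_le _ _).trans ?_
            rw [abs_mul, abs_mul]
        _ ≤ (c + C) * |r - c ^ n| + c ^ n * |q - c| := by
            rw [abs_of_nonneg (pow_nonneg hc.le n)]
            gcongr
            exact hq (m + n)
    · exact ac_comb _ _ (c + C) (c ^ n) (by positivity) (by positivity) ih hw
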